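/- Let k ≥ 1 and let Z_1, …, Z_k be independent geometric random variables where Z_i has success parameter p_i ∈ (0,1]. Set p* = min_i p_i and μ = Σ_{i=1}^k 1/p_i. Then for every real T ≥ μ, the probability P(Z_1 + ⋯ + Z_k ≥ T) ≤ exp(−p* · μ · (T/μ − ln(T/μ) − 1)). -/

import Mathlib

open MeasureTheory ProbabilityTheory
open scoped ENNReal

lemma aux_log_concave {c x : ℝ} (hc0 : 0 < c) (hc1 : c ≤ 1) (hx1 : x < 1) :
    c * Real.log (1 - x) ≤ Real.log (1 - c * x) := by
  have h := (strictConcaveOn_log_Ioi.concaveOn).2 (x := 1 - x) (y := (1:ℝ))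
    (by simp [Set.mem_Ioi]; linarith) (by simp [Set.mem_Ioi])
    hc0.le (by linarith : (0:ℝ) ≤ 1 - c) (by ring)
  have he : c • (1 - x) + (1 - c) • (1:ℝ) = 1 - c * x := by simp [smul_eq_mul]; ring
  rw [he] at h
  simpa [smul_eq_mul, Real.log_one] using h

lemma aux_tsum_singleton (m : Measure ℕ) : ∑' n : ℕ, m {n} = m Set.univ := by
  rw [← Set.iUnion_of_singleton ℕ]
  exact (measure_iUnion (fun i j hij => by simpa [Set.disjoint_singleton] using hij)
    (fun _ => measurableSet_singleton _)).symm

lemma aux_tail_sum {p : ℝ} (hp0 : 0 < p) (hp1 : p ≤ 1) :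
    ∑' n : ℕ, ENNReal.ofReal (p * (1 - p) ^ n) = 1 := by
  have hsum : Summable (fun n : ℕ => p * (1 - p) ^ n) :=
    (summable_geometric_of_lt_one (by linarith) (by linarith)).mul_left _
  rw [← ENNReal.ofReal_tsum_of_nonneg
      (fun n => mul_nonneg hp0.le (pow_nonneg (by linarith) _)) hsum,
    tsum_mul_left, tsum_geometric_of_lt_one (by linarith) (by linarith)]
  have : 1 - (1 - p) = p := by ring
  rw [this, mul_inv_cancel₀ hp0.ne', ENNReal.ofReal_one]

lemma aux_geom_summable {p θ : ℝ} (hp1 : p ≤ 1) (hθp : θ < p) :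
    Summable (fun t : ℕ => (p * (1 - p) ^ t) * ((1 - θ)⁻¹) ^ (t + 1)) := by
  have h1θ : 0 < 1 - θ := by linarith
  have hfun : ∀ t : ℕ, (p * (1 - p) ^ t) * ((1 - θ)⁻¹) ^ (t + 1)
      = (p * (1 - θ)⁻¹) * ((1 - p) * (1 - θ)⁻¹) ^ t := fun t => by
    rw [mul_pow, pow_succ]; ring
  have hr0 : 0 ≤ (1 - p) * (1 - θ)⁻¹ :=
    mul_nonneg (by linarith) (inv_nonneg.2 h1θ.le)
  have hr1 : (1 - p) * (1 - θ)⁻¹ < 1 := by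
    rw [mul_inv_lt_iff₀ h1θ, one_mul]; linarith
  exact (funext hfun : _) ▸ (summable_geometric_of_lt_one hr0 hr1).mul_left _

lemma aux_geom_sum {p θ : ℝ} (hp1 : p ≤ 1) (hθp : θ < p) :
    ∑' t : ℕ, (p * (1 - p) ^ t) * ((1 - θ)⁻¹) ^ (t + 1) = p / (p - θ) := by
  have h1θ : 0 < 1 - θ := by linarith
  have hfun : ∀ t : ℕ, (p * (1 - p) ^ t) * ((1 - θ)⁻¹) ^ (t + 1)
      = (p * (1 - θ)⁻¹) * ((1 - p) * (1 - θ)⁻¹) ^ t := fun t => by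
    rw [mul_pow, pow_succ]; ring
  have hr0 : 0 ≤ (1 - p) * (1 - θ)⁻¹ :=
    mul_nonneg (by linarith) (inv_nonneg.2 h1θ.le)
  have hr1 : (1 - p) * (1 - θ)⁻¹ < 1 := by
    rw [mul_inv_lt_iff₀ h1θ, one_mul]; linarith
  have hkey : 1 - (1 - p) * (1 - θ)⁻¹ = (p - θ) / (1 - θ) := by field_simp; ring
  calc ∑' t : ℕ, (p * (1 - p) ^ t) * ((1 - θ)⁻¹) ^ (t + 1)
      = ∑' t : ℕ, (p * (1 - θ)⁻¹) * ((1 - p) * (1 - θ)⁻¹) ^ t := tsum_congr hfun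
    _ = (p * (1 - θ)⁻¹) * (1 - (1 - p) * (1 - θ)⁻¹)⁻¹ := by
        rw [tsum_mul_left, tsum_geometric_of_lt_one hr0 hr1]
    _ = p / (p - θ) := by
        rw [hkey]
        have hpθ : p - θ ≠ 0 := by linarith
        field_simp

lemma aux_lintegral_single {p θ : ℝ} (hp0 : 0 < p) (hp1 : p ≤ 1) (hθ0 : 0 ≤ θ) (hθp : θ < p)
    (m : Measure ℕ) [IsProbabilityMeasure m]
    (hm : ∀ t : ℕ, 1 ≤ t → m {t} = ENNReal.ofReal (p * (1 - p) ^ (t - 1))) :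
    ∫⁻ n, ENNReal.ofReal (((1 - θ)⁻¹) ^ n) ∂m = ENNReal.ofReal (p / (p - θ)) := by
  have h1θ : 0 < 1 - θ := by linarith
  have hm' : ∀ n : ℕ, m {n + 1} = ENNReal.ofReal (p * (1 - p) ^ n) := fun n => by
    simpa using hm (n + 1) (by omega)
  have htail : ∑' n : ℕ, m {n + 1} = 1 := by
    simp_rw [hm']; exact aux_tail_sum hp0 hp1
  have htot : ∑' n : ℕ, m {n} = 1 := by
    rw [aux_tsum_singleton]; exact measure_univ
  have hzero : m {0} = 0 := by
    have h := tsum_eq_zero_add' (f := fun n : ℕ => m {n}) ENNReal.summable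
    rw [htot, htail] at h
    have h' : (1 : ℝ≥0∞) + m {0} = 1 + 0 := by rw [add_zero, add_comm]; exact h.symm
    exact (ENNReal.add_right_inj ENNReal.one_ne_top).mp h'
  rw [lintegral_countable']
  rw [tsum_eq_zero_add' (f := fun n : ℕ => ENNReal.ofReal (((1 - θ)⁻¹) ^ n) * m {n})
    ENNReal.summable]
  rw [hzero, mul_zero, zero_add]
  have hterm : ∀ n : ℕ, ENNReal.ofReal (((1 - θ)⁻¹) ^ (n + 1)) * m {n + 1}
      = ENNReal.ofReal ((p * (1 - p) ^ n) * ((1 - θ)⁻¹) ^ (n + 1)) := fun n => by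
    rw [hm', ← ENNReal.ofReal_mul (by positivity), mul_comm]
  simp_rw [hterm]
  rw [← ENNReal.ofReal_tsum_of_nonneg
      (fun n => mul_nonneg (mul_nonneg hp0.le (pow_nonneg (by linarith) _)) (by positivity))
      (aux_geom_summable hp1 hθp),
    aux_geom_sum hp1 hθp]

lemma aux_lintegral_prod {Ω : Type*} [MeasurableSpace Ω] (P : Measure Ω)
    [IsProbabilityMeasure P] {k : ℕ}
    (Z : Fin k → Ω → ℕ) (hZmeas : ∀ i, Measurable (Z i))
    (hindep : iIndepFun Z P)
    (g : Fin k → ℕ → ℝ≥0∞) (s : Finset (Fin k)) :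
    ∫⁻ ω, ∏ i ∈ s, g i (Z i ω) ∂P = ∏ i ∈ s, ∫⁻ ω, g i (Z i ω) ∂P := by
  classical
  have hgmeas : ∀ i : Fin k, Measurable (g i) := fun i => measurable_from_top
  set W : Fin k → Ω → ℝ≥0∞ := fun i ω => g i (Z i ω) with hW
  have hWmeas : ∀ i, Measurable (W i) := fun i => (hgmeas i).comp (hZmeas i)
  have hWindep : iIndepFun W P :=
    hindep.comp (fun i => g i) (fun i => hgmeas i)
  induction s using Finset.induction_on with
  | empty => simp
  | insert _ _ ha ih =>
    rename_i a s
    simp only [Finset.prod_insert ha]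
    have hIndep : IndepFun (W a) (fun ω => ∏ j ∈ s, W j ω) P := by
      have h0 := (hWindep.indepFun_finsetProd_of_notMem hWmeas ha).symm
      have he : (∏ j ∈ s, W j) = fun ω => ∏ j ∈ s, W j ω := by
        ext ω; simp [Finset.prod_apply]
      rwa [he] at h0
    have hmul := lintegral_mul_eq_lintegral_mul_lintegral_of_indepFun
      (hWmeas a) (s.measurable_prod fun j _ => hWmeas j) hIndep
    simp only [Pi.mul_apply, Finset.prod_apply] at hmul
    rw [hmul, ih]
/-- **Chernoff-type tail bound for sums of independent geometric random variables.**
If `Z 1, …, Z k` are jointly independent geometric random variables, with `Z i` having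
success parameter `p i ∈ (0,1]` (so `P(Z i = t) = p i * (1 - p i)^(t-1)` for `t ≥ 1`),
`pstar = min_i p i`, and `μ = ∑ i, 1 / p i`, then for every real `T ≥ μ`,
`P(Z 1 + ⋯ + Z k ≥ T) ≤ exp (-(pstar * μ * (T/μ - ln (T/μ) - 1)))`. -/
theorem geometric_sum_tail_bound
    {Ω : Type*} [MeasurableSpace Ω] (P : Measure Ω) [IsProbabilityMeasure P]
    (k : ℕ) (hk : 1 ≤ k)
    (p : Fin k → ℝ) (hp : ∀ i, p i ∈ Set.Ioc (0 : ℝ) 1)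
    (Z : Fin k → Ω → ℕ) (hZmeas : ∀ i, Measurable (Z i))
    (hindep : iIndepFun Z P)
    (hgeom : ∀ i, ∀ t : ℕ, 1 ≤ t →
      P {ω | Z i ω = t} = ENNReal.ofReal (p i * (1 - p i) ^ (t - 1)))
    (pstar : ℝ) (hpstar : IsLeast (Set.range p) pstar)
    (μ : ℝ) (hμ : μ = ∑ i, 1 / p i)
    (T : ℝ) (hT : μ ≤ T) :
    (P {ω | T ≤ ∑ i, (Z i ω : ℝ)}).toReal ≤
      Real.exp (-(pstar * μ * (T / μ - Real.log (T / μ) - 1))) := by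
  classical
  -- basic positivity facts
  obtain ⟨⟨i₀, hi₀⟩, hleast⟩ := hpstar
  have hple : ∀ i, pstar ≤ p i := fun i => hleast ⟨i, rfl⟩
  have hpstar0 : 0 < pstar := hi₀ ▸ (hp i₀).1
  have hpstar1 : pstar ≤ 1 := hi₀ ▸ (hp i₀).2
  have hμpos : 0 < μ := by
    rw [hμ]
    have : Nonempty (Fin k) := ⟨⟨0, hk⟩⟩
    exact Finset.sum_pos (fun i _ => by
      have := (hp i).1; positivity) Finset.univ_nonempty
  have hTpos : 0 < T := lt_of_lt_of_le hμpos hT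
  -- parameters
  set x : ℝ := 1 - μ / T with hxdef
  have hx0 : 0 ≤ x := by
    have : μ / T ≤ 1 := (div_le_one hTpos).2 hT
    simp [hxdef]; linarith
  have hx1 : x < 1 := by
    have : 0 < μ / T := div_pos hμpos hTpos
    simp only [hxdef]; linarith
  set θ : ℝ := pstar * x with hθdef
  have hθ0 : 0 ≤ θ := mul_nonneg hpstar0.le hx0
  have hθlt : θ < pstar := by
    have := mul_lt_mul_of_pos_left hx1 hpstar0
    simpa [hθdef] using this
  have hθp : ∀ i, θ < p i := fun i => lt_of_lt_of_le hθlt (hple i)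
  have h1θ : 0 < 1 - θ := by linarith [hθlt, hpstar1]
  set E : ℝ := (1 - θ)⁻¹ with hEdef
  have hEpos : 0 < E := inv_pos.2 h1θ
  set s : ℝ := Real.log E with hsdef
  have hEs : Real.exp s = E := Real.exp_log hEpos
  have hs0 : 0 ≤ s := by
    rw [hsdef]
    apply Real.log_nonneg
    rw [hEdef, le_inv_comm₀ one_pos h1θ]
    simp; linarith
  have hsθ : θ ≤ s := by
    have hlog : Real.log (1 - θ) ≤ (1 - θ) - 1 := Real.log_le_sub_one_of_pos h1θ
    rw [hsdef, hEdef, Real.log_inv]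
    linarith
  -- the weight functions
  set g : Fin k → ℕ → ℝ≥0∞ := fun _ n => ENNReal.ofReal (E ^ n) with hgdef
  set f : Ω → ℝ≥0∞ := fun ω => ∏ i, g i (Z i ω) with hfdef
  have hgm : ∀ i, Measurable (g i) := fun i => measurable_from_top
  have hfmeas : Measurable f :=
    Finset.measurable_prod _ fun i _ => (hgm i).comp (hZmeas i)
  set c : ℝ≥0∞ := ENNReal.ofReal (Real.exp (s * T)) with hcdef
  have hc0 : c ≠ 0 := by
    simp [hcdef, ENNReal.ofReal_eq_zero, not_le, Real.exp_pos]
  have hctop : c ≠ ⊤ := ENNReal.ofReal_ne_top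
  -- Markov step
  have hsub : {ω | T ≤ ∑ i, (Z i ω : ℝ)} ⊆ {ω | c ≤ f ω} := by
    intro ω hω
    simp only [Set.mem_setOf_eq] at hω ⊢
    have hf : f ω = ENNReal.ofReal (Real.exp ((∑ i, (Z i ω : ℝ)) * s)) := by
      rw [hfdef]
      simp only [hgdef]
      rw [← ENNReal.ofReal_prod_of_nonneg (fun i _ => pow_nonneg hEpos.le _),
        Finset.prod_pow_eq_pow_sum]
      congr 1
      rw [← hEs, ← Real.exp_nat_mul]
      push_cast
      ring
    rw [hf, hcdef]
    apply ENNReal.ofReal_le_ofReal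
    apply Real.exp_le_exp.2
    calc s * T ≤ s * ∑ i, (Z i ω : ℝ) := by
          exact mul_le_mul_of_nonneg_left hω hs0
      _ = (∑ i, (Z i ω : ℝ)) * s := mul_comm _ _
  have hmarkov : c * P {ω | T ≤ ∑ i, (Z i ω : ℝ)} ≤ ∫⁻ ω, f ω ∂P := by
    calc c * P {ω | T ≤ ∑ i, (Z i ω : ℝ)} ≤ c * P {ω | c ≤ f ω} := by
          exact mul_le_mul_right (measure_mono hsub) c
      _ ≤ ∫⁻ ω, f ω ∂P := mul_meas_ge_le_lintegral₀ hfmeas.aemeasurable c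
  -- compute the lintegral
  have hint : ∫⁻ ω, f ω ∂P = ∏ i, ENNReal.ofReal (p i / (p i - θ)) := by
    rw [hfdef]
    have := aux_lintegral_prod P Z hZmeas hindep g Finset.univ
    rw [this]
    apply Finset.prod_congr rfl
    intro i _
    have hmap : ∫⁻ ω, g i (Z i ω) ∂P = ∫⁻ n, g i n ∂(P.map (Z i)) :=
      (lintegral_map measurable_from_top (hZmeas i)).symm
    rw [hmap]
    have : IsProbabilityMeasure (P.map (Z i)) :=
      Measure.isProbabilityMeasure_map (hZmeas i).aemeasurable
    refine aux_lintegral_single (hp i).1 (hp i).2 hθ0 (hθp i) _ ?_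
    intro t ht
    rw [Measure.map_apply (hZmeas i) (measurableSet_singleton t), ← hgeom i t ht]
    congr 1
  -- bound the measure
  set R : ℝ := ∏ i, p i / (p i - θ) with hRdef
  have hRnn : ∀ i : Fin k, 0 ≤ p i / (p i - θ) := fun i =>
    div_nonneg (hp i).1.le (by linarith [hθp i])
  have hPA : P {ω | T ≤ ∑ i, (Z i ω : ℝ)} ≤ ENNReal.ofReal (R / Real.exp (s * T)) := by
    rw [ENNReal.ofReal_div_of_pos (Real.exp_pos _), ← hcdef]
    rw [ENNReal.le_div_iff_mul_le (Or.inl hc0) (Or.inl hctop), mul_comm]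
    rw [hRdef, ENNReal.ofReal_prod_of_nonneg (fun i _ => hRnn i), ← hint]
    exact hmarkov
  have htoReal : (P {ω | T ≤ ∑ i, (Z i ω : ℝ)}).toReal ≤ R / Real.exp (s * T) := by
    refine ENNReal.toReal_le_of_le_ofReal ?_ hPA
    exact div_nonneg (Finset.prod_nonneg fun i _ => hRnn i) (Real.exp_pos _).le
  refine le_trans htoReal ?_
  -- now the purely real estimate
  set L : ℝ := Real.log (T / μ) with hLdef
  have hfactor : ∀ i : Fin k, p i / (p i - θ) ≤ Real.exp (pstar / p i * L) := by
    intro i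
    have hpi0 : 0 < p i := (hp i).1
    have hθpi : θ < p i := hθp i
    have h1 : 0 < 1 - θ / p i := by
      rw [sub_pos, div_lt_one hpi0]; exact hθpi
    have heq : p i / (p i - θ) = (1 - θ / p i)⁻¹ := by
      rw [one_sub_div hpi0.ne', inv_div]
    have hcx : pstar / p i * x = θ / p i := by
      rw [hθdef]; ring
    have hc0' : 0 < pstar / p i := div_pos hpstar0 hpi0
    have hc1' : pstar / p i ≤ 1 := (div_le_one hpi0).2 (hple i)
    have hconc := aux_log_concave hc0' hc1' hx1
    rw [hcx] at hconc
    have h1x : 1 - x = μ / T := by rw [hxdef]; ring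
    have hlogx : Real.log (1 - x) = -L := by
      rw [h1x, hLdef, ← Real.log_inv]
      congr 1
      rw [inv_div]
    rw [hlogx] at hconc
    rw [heq, ← Real.exp_log (inv_pos.2 h1), Real.log_inv]
    apply Real.exp_le_exp.2
    nlinarith [hconc]
  have hRle : R ≤ Real.exp (pstar * μ * L) := by
    have hsum : ∑ i : Fin k, pstar / p i * L = pstar * μ * L := by
      have : ∀ i : Fin k, pstar / p i * L = pstar * L * (1 / p i) := fun i => by ring
      rw [Finset.sum_congr rfl fun i _ => this i, ← Finset.mul_sum, ← hμ]
      ring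
    calc R ≤ ∏ i : Fin k, Real.exp (pstar / p i * L) := by
          rw [hRdef]
          exact Finset.prod_le_prod (fun i _ => hRnn i) (fun i _ => hfactor i)
      _ = Real.exp (∑ i : Fin k, pstar / p i * L) := (Real.exp_sum _ _).symm
      _ = Real.exp (pstar * μ * L) := by rw [hsum]
  have hsT : pstar * T - pstar * μ ≤ s * T := by
    have hθT : θ * T = pstar * T - pstar * μ := by
      rw [hθdef, hxdef]
      field_simp
    calc pstar * T - pstar * μ = θ * T := hθT.symm
      _ ≤ s * T := mul_le_mul_of_nonneg_right hsθ hTpos.le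
  have hμT : μ * (T / μ) = T := by field_simp
  calc R / Real.exp (s * T) ≤ Real.exp (pstar * μ * L) / Real.exp (s * T) := by
        exact div_le_div_of_nonneg_right hRle (Real.exp_pos _).le
    _ = Real.exp (pstar * μ * L - s * T) := (Real.exp_sub _ _).symm
    _ ≤ Real.exp (-(pstar * μ * (T / μ - L - 1))) := by
        apply Real.exp_le_exp.2
        nlinarith [hsT, hμT]
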